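/- Asymptotic normalization (orthogonality) identity. Fix l₁₂, l₁₃, l₂₃, l₂₄, l₃₄ ∈ (0,π) such that both triples (l₁₂,l₁₃,l₂₃) and (l₂₃,l₂₄,l₃₄) satisfy the strict spherical triangle conditions: strict triangle inequalities and sum of the three lengths strictly less than 2π. Let U = {t ∈ (0,π) : there exist linearly independent unit vectors u₁,…,u₄ ∈ ℝ⁴ with arccos⟨u_a,u_b⟩ = l_{ab} for the five fixed pairs and arccos⟨u₁,u₄⟩ = t}, and for t ∈ U let G(t) denote the determinant of the 4×4 Gram matrix (cos l_{ab}) with l₁₄ = t. If U is nonempty, then sin(l₂₃) · ∫_U sin(t)/√(G(t)) dt = π. -/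

import Mathlib

open Real MeasureTheory
open scoped RealInnerProductSpace

noncomputable abbrev E4 := EuclideanSpace ℝ (Fin 4)

/-- The Gram determinant of the tetrahedron (vertices `1,2,3,4`) with the five fixed
edge lengths `l12, l13, l23, l24, l34` and variable opposite edge length `l14 = t`. -/
noncomputable def gramDet14 (l12 l13 l23 l24 l34 t : ℝ) : ℝ :=
  Matrix.det !![1, Real.cos l12, Real.cos l13, Real.cos t;
                Real.cos l12, 1, Real.cos l23, Real.cos l24;
                Real.cos l13, Real.cos l23, 1, Real.cos l34;
                Real.cos t, Real.cos l24, Real.cos l34, 1]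

open Real MeasureTheory
open scoped RealInnerProductSpace

section Aux

lemma gram3_pos {α β γ : ℝ} (hc : γ ∈ Set.Ioo 0 π) (h1 : α < β + γ) (h2 : β < α + γ)
    (h3 : γ < α + β) (h4 : α + β + γ < 2 * π) :
    0 < 1 - cos α ^ 2 - cos β ^ 2 - cos γ ^ 2 + 2 * cos α * cos β * cos γ := by
  have key : 1 - cos α ^ 2 - cos β ^ 2 - cos γ ^ 2 + 2 * cos α * cos β * cos γ
      = (cos γ - cos (α + β)) * (cos (α - β) - cos γ) := by
    rw [cos_add, cos_sub]
    nlinarith [sin_sq α, sin_sq β]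
  rw [key]
  have f1 : cos (α + β) < cos γ := by
    rcases le_or_gt (α + β) π with h | h
    · exact cos_lt_cos_of_nonneg_of_le_pi (le_of_lt hc.1) h h3
    · rw [show α + β = 2*π - (2*π - (α+β)) by ring, Real.cos_two_pi_sub]
      exact cos_lt_cos_of_nonneg_of_le_pi (le_of_lt hc.1) (by linarith) (by linarith)
  have f2 : cos γ < cos (α - β) := by
    rw [← Real.cos_abs (α - β)]
    exact cos_lt_cos_of_nonneg_of_le_pi (abs_nonneg _) hc.2.le
      (abs_lt.mpr ⟨by linarith, by linarith⟩)
  nlinarith [f1, f2]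

lemma det_identity (a b c d e x : ℝ) :
    (1 - c^2) * Matrix.det !![(1:ℝ),a,b,x; a,1,c,d; b,c,1,e; x,d,e,1]
      = (1-a^2-b^2-c^2+2*a*b*c)*(1-d^2-e^2-c^2+2*d*e*c)
        - ((1-c^2)*x - (a*d*(1-c^2)+(b-a*c)*(e-d*c)))^2 := by
  have h : (Fin.succAbove 1 2 : Fin 4) = 3 := by decide
  have h2 : (Fin.succAbove 2 2 : Fin 4) = 3 := by decide
  have h3 : (Fin.castSucc 2 : Fin 4) = 2 := by decide
  have h4 : (Fin.succAbove 3 2 : Fin 4) = 2 := by decide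
  simp [Matrix.det_succ_row_zero, Fin.sum_univ_succ, h, h2, h3, h4]
  ring

lemma gram_posdef {n : ℕ} (u : Fin n → EuclideanSpace ℝ (Fin n))
    (hu : LinearIndependent ℝ u) :
    (Matrix.of fun i j => (⟪u i, u j⟫ : ℝ)).PosDef := by
  constructor
  · ext i j
    simp only [Matrix.IsHermitian, Matrix.conjTranspose_apply, Matrix.of_apply, star_trivial]
    exact real_inner_comm _ _
  · exact (Matrix.posDef_gram_of_linearIndependent (𝕜 := ℝ) hu).2

lemma inner_four (f g : Fin 4 → ℝ) :
    ⟪(WithLp.equiv 2 (Fin 4 → ℝ)).symm f, (WithLp.equiv 2 (Fin 4 → ℝ)).symm g⟫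
      = f 0 * g 0 + f 1 * g 1 + f 2 * g 2 + f 3 * g 3 := by
  simp [PiLp.inner_apply, Fin.sum_univ_four]
  ring

lemma norm_four (f : Fin 4 → ℝ) (h : f 0 ^2 + f 1 ^2 + f 2 ^2 + f 3 ^2 = 1) :
    ‖(WithLp.equiv 2 (Fin 4 → ℝ)).symm f‖ = 1 := by
  rw [EuclideanSpace.norm_eq]
  simp only [WithLp.equiv_symm_apply, PiLp.toLp_apply, Real.norm_eq_abs, sq_abs]
  rw [Fin.sum_univ_four, h]
  exact Real.sqrt_one

lemma li_four (v : Fin 4 → Fin 4 → ℝ) (h : (Matrix.of v).det ≠ 0) :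
    LinearIndependent ℝ (fun i => (WithLp.equiv 2 (Fin 4 → ℝ)).symm (v i)) := by
  have h1 : LinearIndependent ℝ v := by
    rw [show v = fun i => (Matrix.of v) i from rfl]
    exact Matrix.linearIndependent_rows_iff_isUnit.mpr
      ((Matrix.isUnit_iff_isUnit_det _).mpr (isUnit_iff_ne_zero.mpr h))
  exact h1.map' (WithLp.linearEquiv 2 ℝ (Fin 4 → ℝ)).symm.toLinearMap
    (LinearEquiv.ker _)

lemma integral_part {A B s tm tp : ℝ} (hs : 0 < s) (hB : 0 < B)
    (hm : Real.cos tm = A + B) (hp : Real.cos tp = A - B)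
    (h0 : 0 ≤ tm) (hpi : tp ≤ π) (hlt : tm < tp) :
    ∫ t in Set.Ioo tm tp, Real.sin t / Real.sqrt (s^2*(B^2 - (Real.cos t - A)^2)) = π / s := by
  set f : ℝ → ℝ := fun t => Real.sin t / (s * Real.sqrt (B^2 - (Real.cos t - A)^2)) with hf
  have heq : ∀ t, Real.sin t / Real.sqrt (s^2*(B^2 - (Real.cos t - A)^2)) = f t := by
    intro t
    rw [hf]
    rw [Real.sqrt_mul (sq_nonneg s), Real.sqrt_sq hs.le]
  simp only [heq]
  set F : ℝ → ℝ := fun t => -(1/s) * Real.arcsin ((Real.cos t - A)/B) with hF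
  have hFcont : Continuous F := by
    apply Continuous.mul continuous_const
    exact Real.continuous_arcsin.comp ((Real.continuous_cos.sub continuous_const).div_const B)
  have hbound : ∀ t ∈ Set.Ioo tm tp, A - B < Real.cos t ∧ Real.cos t < A + B := by
    intro t ht
    constructor
    · rw [← hp]; exact Real.cos_lt_cos_of_nonneg_of_le_pi (h0.trans ht.1.le) hpi ht.2
    · rw [← hm]; exact Real.cos_lt_cos_of_nonneg_of_le_pi h0 (ht.2.le.trans hpi) ht.1
  have hderiv : ∀ t ∈ Set.Ioo tm tp, HasDerivAt F (f t) t := by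
    intro t ht
    obtain ⟨hb1, hb2⟩ := hbound t ht
    have hp1 : (Real.cos t - A)/B ≠ -1 := by
      intro h
      have : Real.cos t - A = -B := by field_simp at h; linarith
      linarith
    have hp2 : (Real.cos t - A)/B ≠ 1 := by
      intro h
      have : Real.cos t - A = B := by field_simp at h; linarith
      linarith
    have hg : HasDerivAt (fun t => (Real.cos t - A)/B) (-Real.sin t / B) t :=
      ((Real.hasDerivAt_cos t).sub_const A).div_const B
    have harc := (Real.hasDerivAt_arcsin hp1 hp2).comp t hg
    have := harc.const_mul (-(1/s))
    refine this.congr_deriv (Eq.symm ?_)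
    rw [hf]
    have hpos : 0 < B^2 - (Real.cos t - A)^2 := by nlinarith
    have h1 : 1 - ((Real.cos t - A)/B)^2 = (B^2 - (Real.cos t - A)^2)/B^2 := by
      field_simp
    rw [h1, Real.sqrt_div hpos.le, Real.sqrt_sq hB.le]
    have hroot : 0 < Real.sqrt (B^2 - (Real.cos t - A)^2) := Real.sqrt_pos.mpr hpos
    field_simp
  have hnonneg : ∀ t ∈ Set.Ioo tm tp, 0 ≤ f t := by
    intro t ht
    apply div_nonneg
    · exact Real.sin_nonneg_of_nonneg_of_le_pi (h0.trans ht.1.le) (ht.2.le.trans hpi)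
    · positivity
  have hint : IntervalIntegrable f volume tm tp := by
    rw [intervalIntegrable_iff_integrableOn_Ioc_of_le hlt.le]
    exact intervalIntegral.integrableOn_deriv_of_nonneg hFcont.continuousOn hderiv hnonneg
  have hFTC := intervalIntegral.integral_eq_sub_of_hasDeriv_right_of_le hlt.le
    hFcont.continuousOn (fun x hx => (hderiv x hx).hasDerivWithinAt) hint
  have hIoo : ∫ t in Set.Ioo tm tp, f t = ∫ t in tm..tp, f t := by
    rw [intervalIntegral.integral_of_le hlt.le, MeasureTheory.integral_Ioc_eq_integral_Ioo]
  rw [hIoo, hFTC, hF]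
  have e1 : (Real.cos tp - A)/B = -1 := by rw [hp]; field_simp; ring
  have e2 : (Real.cos tm - A)/B = 1 := by rw [hm]; field_simp; ring
  simp only
  rw [e1, e2, Real.arcsin_neg_one, Real.arcsin_one]
  field_simp
  ring

end Aux


set_option maxHeartbeats 2000000 in
/-- **Asymptotic normalization (orthogonality) identity.** Fix five spherical edge
lengths in `(0, π)` forming two strictly admissible spherical triangles
`(l₁₂, l₁₃, l₂₃)` and `(l₂₃, l₂₄, l₃₄)`, and let `U` be the set of lengths `t` of the
remaining edge `(1,4)` for which a nondegenerate spherical tetrahedron exists.  If `U`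
is nonempty then `sin(l₂₃) · ∫_U sin t / √(G(t)) dt = π`. -/
theorem asymptotic_normalization_identity (l12 l13 l23 l24 l34 : ℝ)
    (h12 : l12 ∈ Set.Ioo 0 π) (h13 : l13 ∈ Set.Ioo 0 π) (h23 : l23 ∈ Set.Ioo 0 π)
    (h24 : l24 ∈ Set.Ioo 0 π) (h34 : l34 ∈ Set.Ioo 0 π)
    (htri1 : l12 < l13 + l23 ∧ l13 < l12 + l23 ∧ l23 < l12 + l13 ∧
      l12 + l13 + l23 < 2 * π)
    (htri2 : l23 < l24 + l34 ∧ l24 < l23 + l34 ∧ l34 < l23 + l24 ∧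
      l23 + l24 + l34 < 2 * π)
    (U : Set ℝ)
    (hU : U = {t ∈ Set.Ioo 0 π | ∃ u : Fin 4 → E4,
      LinearIndependent ℝ u ∧ (∀ i, ‖u i‖ = 1) ∧
      Real.arccos ⟪u 0, u 1⟫ = l12 ∧ Real.arccos ⟪u 0, u 2⟫ = l13 ∧
      Real.arccos ⟪u 1, u 2⟫ = l23 ∧ Real.arccos ⟪u 1, u 3⟫ = l24 ∧
      Real.arccos ⟪u 2, u 3⟫ = l34 ∧ Real.arccos ⟪u 0, u 3⟫ = t})
    (hne : U.Nonempty) :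
    Real.sin l23 * ∫ t in U, Real.sin t / Real.sqrt (gramDet14 l12 l13 l23 l24 l34 t)
      = π := by
  obtain ⟨ht1a, ht1b, ht1c, ht1d⟩ := htri1
  obtain ⟨ht2a, ht2b, ht2c, ht2d⟩ := htri2
  set a := Real.cos l12 with ha
  set b := Real.cos l13 with hb
  set c := Real.cos l23 with hc
  set d := Real.cos l24 with hd
  set e := Real.cos l34 with he
  set s := Real.sin l23 with hs'
  have hs : 0 < s := Real.sin_pos_of_pos_of_lt_pi h23.1 h23.2
  have hsc : s^2 = 1 - c^2 := Real.sin_sq l23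
  set g1 := 1 - a^2 - b^2 - c^2 + 2*a*b*c with hg1def
  set g2 := 1 - d^2 - e^2 - c^2 + 2*d*e*c with hg2def
  have hg1 : 0 < g1 := by
    have := gram3_pos (α := l12) (β := l13) (γ := l23) h23 ht1a ht1b ht1c ht1d
    rw [← ha, ← hb, ← hc, ← hg1def] at this; exact this
  have hg2 : 0 < g2 := by
    have := gram3_pos (α := l24) (β := l34) (γ := l23) h23 (by linarith) (by linarith)
      (by linarith) (by linarith)
    rw [← hd, ← he, ← hc, ← hg2def] at this; exact this
  set y1 := (b - a*c)/s with hy1def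
  set z1 := Real.sqrt g1 / s with hz1def
  set y4 := (e - d*c)/s with hy4def
  set z4 := Real.sqrt g2 / s with hz4def
  set A := a*d + y1*y4 with hAdef
  set B := z1*z4 with hBdef
  have hz1sq : z1^2 = g1/s^2 := by rw [hz1def, div_pow, Real.sq_sqrt hg1.le]
  have hz4sq : z4^2 = g2/s^2 := by rw [hz4def, div_pow, Real.sq_sqrt hg2.le]
  have hz1pos : 0 < z1 := div_pos (Real.sqrt_pos.mpr hg1) hs
  have hz4pos : 0 < z4 := div_pos (Real.sqrt_pos.mpr hg2) hs
  have hB : 0 < B := mul_pos hz1pos hz4pos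
  have unit1 : a^2 + y1^2 + z1^2 = 1 := by
    rw [hy1def, div_pow, hz1sq]
    field_simp
    linear_combination (a^2 - 1) * hsc
  have unit4 : d^2 + y4^2 + z4^2 = 1 := by
    rw [hy4def, div_pow, hz4sq]
    field_simp
    linear_combination (d^2 - 1) * hsc
  have key1 : 1 - (a*d + y1*y4 + z1*z4)^2
      = (a*y4 - d*y1)^2 + (a*z4 - d*z1)^2 + (y1*z4 - y4*z1)^2 := by
    linear_combination (-(d^2+y4^2+z4^2)) * unit1 - unit4
  have key2 : 1 - (a*d + y1*y4 - z1*z4)^2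
      = (a*y4 - d*y1)^2 + (a*z4 + d*z1)^2 + (y1*z4 + y4*z1)^2 := by
    linear_combination (-(d^2+y4^2+z4^2)) * unit1 - unit4
  have hAB1 : A + B ≤ 1 := by
    have h1 : (a*d + y1*y4 + z1*z4)^2 ≤ 1 := by
      have s1 := sq_nonneg (a*y4 - d*y1)
      have s2 := sq_nonneg (a*z4 - d*z1)
      have s3 := sq_nonneg (y1*z4 - y4*z1)
      linarith [key1]
    have := abs_le.mp ((sq_le_one_iff_abs_le_one _).mp h1)
    rw [hAdef, hBdef]
    linarith [this.2]
  have hAB2 : -1 ≤ A - B := by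
    have h1 : (a*d + y1*y4 - z1*z4)^2 ≤ 1 := by
      have s1 := sq_nonneg (a*y4 - d*y1)
      have s2 := sq_nonneg (a*z4 + d*z1)
      have s3 := sq_nonneg (y1*z4 + y4*z1)
      linarith [key2]
    have := abs_le.mp ((sq_le_one_iff_abs_le_one _).mp h1)
    rw [hAdef, hBdef]
    linarith [this.1]
  have hApoly : s^2 * A = a*d*s^2 + (b - a*c)*(e - d*c) := by
    rw [hAdef, hy1def, hy4def]
    field_simp
  have hBpoly : s^4 * B^2 = g1*g2 := by
    rw [hBdef, mul_pow, hz1sq, hz4sq]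
    field_simp
  have hdet : ∀ t : ℝ, gramDet14 l12 l13 l23 l24 l34 t
      = s^2*(B^2 - (Real.cos t - A)^2) := by
    intro t
    have base := det_identity a b c d e (Real.cos t)
    rw [← hg1def, ← hg2def, ← hsc] at base
    have hgd : gramDet14 l12 l13 l23 l24 l34 t
        = Matrix.det !![(1:ℝ),a,b,Real.cos t; a,1,c,d; b,c,1,e; Real.cos t,d,e,1] := by
      rw [ha, hb, hc, hd, he]
      rfl
    rw [hgd]
    have hs2 : (s:ℝ)^2 ≠ 0 := by positivity
    refine mul_left_cancel₀ hs2 ?_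
    linear_combination base - hBpoly
      - (2*s^2*Real.cos t - s^2*A - (a*d*s^2 + (b - a*c)*(e - d*c))) * hApoly
  set tm := Real.arccos (A+B) with htmdef
  set tp := Real.arccos (A-B) with htpdef
  have hABlt : A - B < A + B := by linarith
  have hAB2' : (-1:ℝ) ≤ A + B := by linarith
  have hAB1' : A - B ≤ 1 := by linarith
  have hcostm : Real.cos tm = A + B := Real.cos_arccos hAB2' hAB1
  have hcostp : Real.cos tp = A - B := Real.cos_arccos hAB2 hAB1'
  have htmtp : tm < tp :=
    Real.strictAntiOn_arccos ⟨hAB2, hAB1'⟩ ⟨hAB2', hAB1⟩ hABlt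
  have htm0 : 0 ≤ tm := Real.arccos_nonneg _
  have htppi : tp ≤ π := Real.arccos_le_pi _
  have hs2 : (0:ℝ) < s^2 := by positivity
  have hUeq : U = Set.Ioo tm tp := by
    rw [hU]
    ext t
    simp only [Set.mem_setOf_eq, Set.mem_Ioo]
    constructor
    · rintro ⟨⟨ht0, htpi⟩, u, hli, hnorm, e01, e02, e12, e13, e23, e03⟩
      have hiv : ∀ i j : Fin 4, ⟪u i, u j⟫ = Real.cos (Real.arccos ⟪u i, u j⟫) := by
        intro i j
        rw [Real.cos_arccos]
        · have h := abs_real_inner_le_norm (u i) (u j)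
          rw [hnorm i, hnorm j, one_mul] at h
          linarith [abs_le.mp h |>.1]
        · have h := abs_real_inner_le_norm (u i) (u j)
          rw [hnorm i, hnorm j, one_mul] at h
          linarith [abs_le.mp h |>.2]
      have v01 : ⟪u 0, u 1⟫ = a := by rw [hiv 0 1, e01]
      have v02 : ⟪u 0, u 2⟫ = b := by rw [hiv 0 2, e02]
      have v12 : ⟪u 1, u 2⟫ = c := by rw [hiv 1 2, e12]
      have v13 : ⟪u 1, u 3⟫ = d := by rw [hiv 1 3, e13]
      have v23 : ⟪u 2, u 3⟫ = e := by rw [hiv 2 3, e23]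
      have v03 : ⟪u 0, u 3⟫ = Real.cos t := by rw [hiv 0 3, e03]
      have v10 : ⟪u 1, u 0⟫ = a := by rw [real_inner_comm]; exact v01
      have v20 : ⟪u 2, u 0⟫ = b := by rw [real_inner_comm]; exact v02
      have v21 : ⟪u 2, u 1⟫ = c := by rw [real_inner_comm]; exact v12
      have v31 : ⟪u 3, u 1⟫ = d := by rw [real_inner_comm]; exact v13
      have v32 : ⟪u 3, u 2⟫ = e := by rw [real_inner_comm]; exact v23
      have v30 : ⟪u 3, u 0⟫ = Real.cos t := by rw [real_inner_comm]; exact v03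
      have vdiag : ∀ i, ⟪u i, u i⟫ = 1 := fun i => by
        rw [real_inner_self_eq_norm_sq, hnorm i, one_pow]
      have hmat : (Matrix.of fun i j => (⟪u i, u j⟫ : ℝ))
          = !![(1:ℝ),a,b,Real.cos t; a,1,c,d; b,c,1,e; Real.cos t,d,e,1] := by
        ext i j
        fin_cases i <;> fin_cases j <;>
          simp only [Matrix.of_apply, Matrix.cons_val', Matrix.cons_val_zero,
            Matrix.cons_val_one, Matrix.head_cons, Matrix.empty_val',
            Matrix.cons_val_fin_one, Matrix.head_fin_const, Matrix.cons_val_two,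
            Matrix.tail_cons, Matrix.cons_val_three] <;>
          first
            | exact vdiag _ | exact v01 | exact v02 | exact v12 | exact v13
            | exact v23 | exact v03 | exact v10 | exact v20 | exact v21
            | exact v31 | exact v32 | exact v30
      have hpos := (gram_posdef u hli).det_pos
      rw [hmat] at hpos
      have hgd : gramDet14 l12 l13 l23 l24 l34 t
          = Matrix.det !![(1:ℝ),a,b,Real.cos t; a,1,c,d; b,c,1,e; Real.cos t,d,e,1] := by
        rw [ha, hb, hc, hd, he]; rfl
      have hGpos : 0 < s^2*(B^2 - (Real.cos t - A)^2) := by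
        rw [← hdet t, hgd]; exact hpos
      have hX : 0 < B^2 - (Real.cos t - A)^2 := by
        rcases mul_pos_iff.mp hGpos with ⟨_, h2⟩ | ⟨h1, _⟩
        · exact h2
        · exact absurd hs2 (not_lt.mpr h1.le)
      have hsqlt : (Real.cos t - A)^2 < B^2 := by linarith only [hX]
      obtain ⟨hcl, hcr⟩ := abs_lt_of_sq_lt_sq' hsqlt hB.le
      have hcost1 : Real.cos t < A + B := by linarith only [hcr]
      have hcost2 : A - B < Real.cos t := by linarith only [hcl]
      constructor
      · have h1 : Real.arccos (A+B) < Real.arccos (Real.cos t) :=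
          Real.strictAntiOn_arccos ⟨Real.neg_one_le_cos t, by linarith⟩
            ⟨hAB2', hAB1⟩ hcost1
        rwa [Real.arccos_cos ht0.le htpi.le] at h1
      · have h1 : Real.arccos (Real.cos t) < Real.arccos (A-B) :=
          Real.strictAntiOn_arccos ⟨hAB2, hAB1'⟩
            ⟨by linarith [Real.neg_one_le_cos t], Real.cos_le_one t⟩ hcost2
        rwa [Real.arccos_cos ht0.le htpi.le] at h1
    · rintro ⟨htm, htp⟩
      have ht0 : 0 < t := lt_of_le_of_lt htm0 htm
      have htpi : t < π := htp.trans_le htppi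
      have hcx1 : Real.cos t < A + B := by
        rw [← hcostm]
        exact Real.cos_lt_cos_of_nonneg_of_le_pi htm0 htpi.le htm
      have hcx2 : A - B < Real.cos t := by
        rw [← hcostp]
        exact Real.cos_lt_cos_of_nonneg_of_le_pi ht0.le htppi htp
      set p := (Real.cos t - A)/B with hpdef
      have hp1 : -1 < p := by
        rw [hpdef, lt_div_iff₀ hB]
        linarith
      have hp2 : p < 1 := by
        rw [hpdef, div_lt_one hB]
        linarith
      have hq0 : (0:ℝ) < 1 - p^2 := by
        have := sq_lt_sq' hp1 hp2
        simp only [one_pow] at this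
        linarith only [this]
      set q := Real.sqrt (1 - p^2) with hqdef
      have hq2 : q^2 = 1 - p^2 := Real.sq_sqrt hq0.le
      have hqpos : 0 < q := Real.sqrt_pos.mpr hq0
      refine ⟨⟨ht0, htpi⟩,
        fun i => (WithLp.equiv 2 (Fin 4 → ℝ)).symm
          (![![a, y1, z1, 0], ![1, 0, 0, 0], ![c, s, 0, 0], ![d, y4, z4*p, z4*q]] i),
        ?_, ?_, ?_, ?_, ?_, ?_, ?_, ?_⟩
      · apply li_four
        have hdetM : (Matrix.of
            ![![a, y1, z1, 0], ![1, 0, 0, 0], ![c, s, 0, 0], ![d, y4, z4*p, z4*q]]).det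
            = s*(z1*(z4*q)) := by
          have h : (Fin.succAbove 1 2 : Fin 4) = 3 := by decide
          have h2 : (Fin.succAbove 2 2 : Fin 4) = 3 := by decide
          have h3 : (Fin.castSucc 2 : Fin 4) = 2 := by decide
          have h4 : (Fin.succAbove 3 2 : Fin 4) = 2 := by decide
          show (Matrix.det !![a, y1, z1, 0; 1, 0, 0, 0; c, s, 0, 0; d, y4, z4*p, z4*q]) = _
          simp [Matrix.det_succ_row_zero, Fin.sum_univ_succ, h, h2, h3, h4]
          ring
        rw [hdetM]
        positivity
      · intro i
        fin_cases i <;>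
        · apply norm_four
          norm_num [Matrix.cons_val_two, Matrix.cons_val_three, Matrix.tail_cons,
            Matrix.head_cons] <;>
          first
          | linear_combination unit1
          | linear_combination hsc
          | linear_combination unit4 + z4^2*hq2
      · show Real.arccos ⟪(WithLp.equiv 2 (Fin 4 → ℝ)).symm ![a, y1, z1, 0],
          (WithLp.equiv 2 (Fin 4 → ℝ)).symm ![(1:ℝ), 0, 0, 0]⟫ = l12
        rw [inner_four]
        simp only [Matrix.cons_val_zero, Matrix.cons_val_one, Matrix.head_cons,
          Matrix.cons_val_two, Matrix.tail_cons, Matrix.cons_val_three]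
        rw [show a*1 + y1*0 + z1*0 + 0*0 = a by ring, ha]
        exact Real.arccos_cos h12.1.le h12.2.le
      · show Real.arccos ⟪(WithLp.equiv 2 (Fin 4 → ℝ)).symm ![a, y1, z1, 0],
          (WithLp.equiv 2 (Fin 4 → ℝ)).symm ![c, s, 0, 0]⟫ = l13
        rw [inner_four]
        simp only [Matrix.cons_val_zero, Matrix.cons_val_one, Matrix.head_cons,
          Matrix.cons_val_two, Matrix.tail_cons, Matrix.cons_val_three]
        rw [show a*c + y1*s + z1*0 + 0*0 = b by rw [hy1def]; field_simp; ring, hb]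
        exact Real.arccos_cos h13.1.le h13.2.le
      · show Real.arccos ⟪(WithLp.equiv 2 (Fin 4 → ℝ)).symm ![(1:ℝ), 0, 0, 0],
          (WithLp.equiv 2 (Fin 4 → ℝ)).symm ![c, s, 0, 0]⟫ = l23
        rw [inner_four]
        simp only [Matrix.cons_val_zero, Matrix.cons_val_one, Matrix.head_cons,
          Matrix.cons_val_two, Matrix.tail_cons, Matrix.cons_val_three]
        rw [show (1:ℝ)*c + 0*s + 0*0 + 0*0 = c by ring, hc]
        exact Real.arccos_cos h23.1.le h23.2.le
      · show Real.arccos ⟪(WithLp.equiv 2 (Fin 4 → ℝ)).symm ![(1:ℝ), 0, 0, 0],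
          (WithLp.equiv 2 (Fin 4 → ℝ)).symm ![d, y4, z4*p, z4*q]⟫ = l24
        rw [inner_four]
        simp only [Matrix.cons_val_zero, Matrix.cons_val_one, Matrix.head_cons,
          Matrix.cons_val_two, Matrix.tail_cons, Matrix.cons_val_three]
        rw [show (1:ℝ)*d + 0*y4 + 0*(z4*p) + 0*(z4*q) = d by ring, hd]
        exact Real.arccos_cos h24.1.le h24.2.le
      · show Real.arccos ⟪(WithLp.equiv 2 (Fin 4 → ℝ)).symm ![c, s, 0, 0],
          (WithLp.equiv 2 (Fin 4 → ℝ)).symm ![d, y4, z4*p, z4*q]⟫ = l34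
        rw [inner_four]
        simp only [Matrix.cons_val_zero, Matrix.cons_val_one, Matrix.head_cons,
          Matrix.cons_val_two, Matrix.tail_cons, Matrix.cons_val_three]
        rw [show c*d + s*y4 + 0*(z4*p) + 0*(z4*q) = e by rw [hy4def]; field_simp; ring, he]
        exact Real.arccos_cos h34.1.le h34.2.le
      · show Real.arccos ⟪(WithLp.equiv 2 (Fin 4 → ℝ)).symm ![a, y1, z1, 0],
          (WithLp.equiv 2 (Fin 4 → ℝ)).symm ![d, y4, z4*p, z4*q]⟫ = t
        rw [inner_four]
        simp only [Matrix.cons_val_zero, Matrix.cons_val_one, Matrix.head_cons,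
          Matrix.cons_val_two, Matrix.tail_cons, Matrix.cons_val_three]
        rw [show a*d + y1*y4 + z1*(z4*p) + 0*(z4*q) = Real.cos t by
          rw [hpdef]; field_simp [hAdef, hBdef]; ring]
        exact Real.arccos_cos ht0.le htpi.le
  rw [hUeq]
  have hcongr : ∀ t:ℝ, Real.sin t / Real.sqrt (gramDet14 l12 l13 l23 l24 l34 t)
      = Real.sin t / Real.sqrt (s^2*(B^2 - (Real.cos t - A)^2)) := fun t => by rw [hdet t]
  simp only [hcongr]
  rw [integral_part hs hB hcostm hcostp htm0 htppi htmtp]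
  field_simp
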